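/- arXiv:1704.00597 — 2 statements merged into one kernel-verified Lean document; each statement's English description precedes it below -/
import Mathlib

section
/- Let q>1 be real, k ≥ 1 rational, δ̃>0, and let f satisfy the hypotheses required for the q-Laplace transform of order k along direction d (holomorphic on D(0,ρ) ∪ U_d, continuous on closure(D(0,ρ)), with ‖f(x)‖ ≤ K·exp( k·log²|x|/(2 log q) + α·log|x| ) on U_d for |x| ≥ ρ and ‖f(x)‖ ≤ K on closure(D(0,ρ))). Then for every σ ≥ 0 and j ∈ ℚ, T^σ σ_q^j ( L^d_{q;1/k} f )(T) = L^d_{q;1/k}( x ↦ ( x^σ/(q^{1/k})^{σ(σ−1)/2} ) σ_q^{j−σ/k} f(x) )(T), for every T ∈ R_{d,δ̃} ∩ D(0,r₁) with 0 < r₁ ≤ q^{(1/2−α)/k}/2. -/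
noncomputable section

open Complex MeasureTheory Set

namespace Paper

/-- The weight `(1+|m|)^μ e^{β|m|}` in the Fourier variable `m`. -/
def mWeight (β μ m : ℝ) : ℝ := (1 + |m|) ^ μ * Real.exp (β * |m|)

/-- The set of weighted values of `h`, whose supremum is the `E_{(β,μ)}`-norm. -/
def EnormSet (β μ : ℝ) (h : ℝ → ℂ) : Set ℝ :=
  {x | ∃ m : ℝ, x = mWeight β μ m * ‖h m‖}

/-- The norm of the Banach space `E_{(β,μ)}`. -/
def Enorm (β μ : ℝ) (h : ℝ → ℂ) : ℝ := sSup (EnormSet β μ h)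

/-- Membership in the Banach space `E_{(β,μ)}`. -/
def MemE (β μ : ℝ) (h : ℝ → ℂ) : Prop := Continuous h ∧ BddAbove (EnormSet β μ h)

/-- Open unbounded sector with vertex `0`, bisecting direction `d` and (half-)opening `op`. -/
def uSector (d op : ℝ) : Set ℂ :=
  {z | ∃ t θ : ℝ, 0 < t ∧ |θ - d| < op ∧ z = (t : ℂ) * Complex.exp (Complex.I * (θ : ℂ))}

/-- Bounded open sector with vertex `0`, direction `d`, opening `op` and radius `r`. -/
def bSector (d op r : ℝ) : Set ℂ :=
  {z | ∃ t θ : ℝ, 0 < t ∧ t < r ∧ |θ - d| < op ∧ z = (t : ℂ) * Complex.exp (Complex.I * (θ : ℂ))}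

/-- `q^x` (real power) viewed as a complex number. -/
def qc (q x : ℝ) : ℂ := ((q ^ x : ℝ) : ℂ)

/-- The weight `exp(-(k/2) log²|τ+δ|/log q - α log|τ+δ|)` (first family). -/
def tauWeight1 (q k α δ : ℝ) (τ : ℂ) : ℝ :=
  Real.exp (-(k / 2) * (Real.log (‖τ + (δ : ℂ)‖)) ^ 2 / Real.log q
    - α * Real.log (‖τ + (δ : ℂ)‖))

/-- The weight `exp(-(k/2) log²|τ|/log q - ν log|τ|)` (second family). -/
def tauWeight2 (q k ν : ℝ) (τ : ℂ) : ℝ :=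
  Real.exp (-(k / 2) * (Real.log (‖τ‖)) ^ 2 / Real.log q - ν * Real.log (‖τ‖))

/-- Weighted values of a function of `(τ,m)` over `Ω × ℝ`. -/
def ExpSet (β μ : ℝ) (w : ℂ → ℝ) (Ω : Set ℂ) (h : ℂ → ℝ → ℂ) : Set ℝ :=
  {x | ∃ τ ∈ Ω, ∃ m : ℝ, x = mWeight β μ m * w τ * ‖h τ m‖}

/-- Norm of the weighted Banach spaces `Exp^q_{(…)}`. -/
def ExpNorm (β μ : ℝ) (w : ℂ → ℝ) (Ω : Set ℂ) (h : ℂ → ℝ → ℂ) : ℝ := sSup (ExpSet β μ w Ω h)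

/-- Membership in the weighted Banach spaces `Exp^q_{(…)}`: continuity on `Ω × ℝ`,
holomorphy in `τ` on the open part `Ωo`, and finiteness of the weighted sup. -/
def MemExp (β μ : ℝ) (w : ℂ → ℝ) (Ω Ωo : Set ℂ) (h : ℂ → ℝ → ℂ) : Prop :=
  ContinuousOn (fun p : ℂ × ℝ => h p.1 p.2) (Ω ×ˢ (univ : Set ℝ)) ∧
  (∀ m : ℝ, DifferentiableOn ℂ (fun τ => h τ m) Ωo) ∧
  BddAbove (ExpSet β μ w Ω h)

/-- The convolution `f ⋆^P g (m) = ∫ f(m-m₁) P(im₁) g(m₁) dm₁`. -/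
def starQ (P : Polynomial ℂ) (f g : ℝ → ℂ) (m : ℝ) : ℂ :=
  ∫ m₁ : ℝ, f (m - m₁) * P.eval (Complex.I * (m₁ : ℂ)) * g m₁

/-- The `q`-convolution of order `k`:
`φ_k ⋆^P_{q;1/k} f = Σ_{h=0}^{p₁} τ^h/(q^{1/k})^{h(h-1)/2} ( c_h ⋆^P σ_{q,τ}^{-h/k} f )`. -/
def qConv (q k : ℝ) (p₁ : ℕ) (P : Polynomial ℂ) (c : ℕ → ℝ → ℂ) (f : ℂ → ℝ → ℂ)
    (τ : ℂ) (m : ℝ) : ℂ :=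
  ∑ h ∈ Finset.range (p₁ + 1),
    (τ ^ h / qc q (((h : ℝ) * ((h : ℝ) - 1)) / (2 * k))) *
      starQ P (c h) (fun m₁ => f (τ / qc q ((h : ℝ) / k)) m₁) m

/-- The Jacobi theta function `Θ_{q^{1/k}}(x) = Σ_{n ∈ ℤ} q^{-n(n-1)/(2k)} x^n`. -/
def theta (q k : ℝ) (x : ℂ) : ℂ :=
  ∑' n : ℤ, qc q (-(((n : ℝ) * ((n : ℝ) - 1)) / (2 * k))) * x ^ n

/-- The constant `π_{q^{1/k}} = (log q / k) Π_{n≥0} (1 - q^{-(n+1)/k})⁻¹`. -/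
def piq (q k : ℝ) : ℝ := (Real.log q / k) * ∏' n : ℕ, (1 - q ^ (-(((n : ℝ) + 1) / k)))⁻¹

/-- The point `t e^{i d}` of the half-line `L_d`. -/
def ray (d t : ℝ) : ℂ := (t : ℂ) * Complex.exp (Complex.I * (d : ℂ))

/-- The `q`-Laplace transform of order `k` along direction `d`:
`L^d_{q;1/k}(f)(T) = (1/π_{q^{1/k}}) ∫_{L_d} f(u)/Θ_{q^{1/k}}(u/T) du/u`. -/
def qLaplace {E : Type*} [NormedAddCommGroup E] [NormedSpace ℂ E]
    (q k d : ℝ) (f : ℂ → E) (T : ℂ) : E :=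
  ∫ t in Set.Ioi (0 : ℝ), (((piq q k : ℂ) * theta q k (ray d t / T) * (t : ℂ))⁻¹) • f (ray d t)

/-- The domain `R_{d,δ̃} = {T ≠ 0 : |1 + re^{id}/T| > δ̃ for all r ≥ 0}`. -/
def Rset (d δt : ℝ) : Set ℂ :=
  {T | T ≠ 0 ∧ ∀ r : ℝ, 0 ≤ r → δt < ‖1 + ray d r / T‖}

/-- The inverse Fourier transform `F⁻¹(g)(z) = (2π)^{-1/2} ∫ g(m) e^{izm} dm`. -/
def invFourier (g : ℝ → ℂ) (z : ℂ) : ℂ :=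
  (Real.sqrt (2 * Real.pi))⁻¹ * ∫ m : ℝ, g m * Complex.exp (Complex.I * z * (m : ℂ))

/-- The differential operator `P(∂_z)` applied to a function of `z`. -/
def Pdz (P : Polynomial ℂ) (f : ℂ → ℂ) (z : ℂ) : ℂ :=
  ∑ i ∈ Finset.range (P.natDegree + 1), P.coeff i * iteratedDeriv i f z

/-- The horizontal strip `H_b = {z : |Im z| < b}`. -/
def Hstrip (b : ℝ) : Set ℂ := {z | |z.im| < b}

/-- Good covering `(ℰ_p)_{0 ≤ p ≤ ς-1}` of the punctured neighbourhood of the origin. -/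
def IsGoodCovering (ς : ℕ) (ε₀ : ℝ) (E : ℕ → Set ℂ) : Prop :=
  2 ≤ ς ∧ 0 < ε₀ ∧
  (∀ p < ς, ∃ d op : ℝ, 0 < op ∧ E p = bSector d op ε₀) ∧
  (∀ j < ς, ∀ k < ς, (E j ∩ E k).Nonempty ↔ (j = k ∨ (j + 1) % ς = k ∨ (k + 1) % ς = j)) ∧
  (∃ U : Set ℂ, U ∈ nhds (0 : ℂ) ∧ (⋃ p ∈ Finset.range ς, E p) = U \ {0})

/-- `f : V → F` admits `Σ c_n ε^n` as `q`-Gevrey asymptotic expansion of order `1/k` on `V`. -/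
def HasQExp {F : Type*} [NormedAddCommGroup F] [NormedSpace ℂ F]
    (q k : ℝ) (V : Set ℂ) (f : ℂ → F) (c : ℕ → F) : Prop :=
  ∀ d op r : ℝ, 0 < op → 0 < r → closure (bSector d op r) \ {0} ⊆ V →
    ∃ A C : ℝ, 0 < A ∧ 0 < C ∧ ∀ ε ∈ bSector d op r, ∀ N : ℕ,
      ‖f ε - ∑ n ∈ Finset.range (N + 1), ε ^ n • c n‖
        ≤ C * A ^ (N + 1) * q ^ (((N : ℝ) * ((N : ℝ) + 1)) / (2 * k)) * ‖ε‖ ^ (N + 1)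

/-- `q`-Gevrey asymptotic expansion of order `1/k`, for functions with values in the Banach
space `𝔽` of bounded holomorphic functions on `T × H` (sup-norm expressed pointwise). -/
def HasQExpPt (q k : ℝ) (V T H : Set ℂ)
    (f : ℂ → ℂ → ℂ → ℂ) (c : ℕ → ℂ → ℂ → ℂ) : Prop :=
  ∀ d op r : ℝ, 0 < op → 0 < r → closure (bSector d op r) \ {0} ⊆ V →
    ∃ A C : ℝ, 0 < A ∧ 0 < C ∧ ∀ ε ∈ bSector d op r, ∀ N : ℕ, ∀ t ∈ T, ∀ z ∈ H,
      ‖f t z ε - ∑ n ∈ Finset.range (N + 1), c n t z * ε ^ n‖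
        ≤ C * A ^ (N + 1) * q ^ (((N : ℝ) * ((N : ℝ) + 1)) / (2 * k)) * ‖ε‖ ^ (N + 1)

/-- The roots `q_ℓ(m)` of the polynomial `P_{m,1}`. -/
def qroot1 (q : ℝ) (k₁ dD1 : ℕ) (Qp RD1 : Polynomial ℂ) (ℓ : ℕ) (m : ℝ) : ℂ :=
  Complex.exp (2 * (Real.pi : ℂ) * Complex.I * (ℓ : ℂ) / (dD1 : ℂ)) *
    (Qp.eval (Complex.I * (m : ℂ)) / RD1.eval (Complex.I * (m : ℂ))) ^ ((1 : ℂ) / (dD1 : ℂ)) *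
    qc q (((dD1 : ℝ) + 2 * (k₁ : ℝ) - 1) / (2 * (k₁ : ℝ)))

/-- Membership in the unbounded sector `{z : |z| ≥ r, |arg z - dd| ≤ νν}`. -/
def inSectorGE (dd νν r : ℝ) (z : ℂ) : Prop :=
  r ≤ ‖z‖ ∧
    ∃ θ : ℝ, |θ - dd| ≤ νν ∧ z = ((‖z‖ : ℝ) : ℂ) * Complex.exp (Complex.I * (θ : ℂ))

/-- The main `q`-difference-differential equation, at the point `(t,z,ε)`. -/
def mainEq (q : ℝ) (k₁ k₂ : ℕ) (dD1 dD2 D : ℕ) (d δ' Δ : ℕ → ℕ)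
    (Qp RD1 RD2 : Polynomial ℂ) (Rl : ℕ → Polynomial ℂ)
    (c : ℕ → ℂ → ℂ → ℂ → ℂ) (f : ℂ → ℂ → ℂ → ℂ) (u : ℂ → ℂ → ℂ → ℂ)
    (t z ε : ℂ) : Prop :=
  Pdz Qp (fun z' => u ((q : ℂ) * t) z' ε) z
    = (ε * t) ^ dD1 * Pdz RD1 (fun z' => u (qc q ((dD1 : ℝ) / (k₁ : ℝ) + 1) * t) z' ε) z
    + (ε * t) ^ dD2 * Pdz RD2 (fun z' => u (qc q ((dD2 : ℝ) / (k₂ : ℝ) + 1) * t) z' ε) z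
    + ∑ ℓ ∈ Finset.Icc 1 (D - 1),
        ε ^ (Δ ℓ) * t ^ (d ℓ) *
          (c ℓ (qc q (δ' ℓ) * t) z ε * Pdz (Rl ℓ) (fun z' => u (qc q (δ' ℓ) * t) z' ε) z)
    + f ((q : ℂ) * t) z ε

/-- The first auxiliary equation in the `q`-Borel plane of order `k₁` (equation (23)). -/
def borelEq1 (q : ℝ) (k₁ k₂ : ℕ) (D p₁ : ℕ) (dD1 dD2 : ℕ) (d δ' Δ : ℕ → ℕ)
    (Qp RD1 RD2 : Polynomial ℂ) (Rl : ℕ → Polynomial ℂ)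
    (C : ℕ → ℕ → ℝ → ℂ) (Ψ : ℂ → ℝ → ℂ) (ε : ℂ)
    (w : ℂ → ℝ → ℂ) (τ : ℂ) (m : ℝ) : Prop :=
  Qp.eval (Complex.I * (m : ℂ)) *
      (τ ^ k₁ / qc q (((k₁ : ℝ) * ((k₁ : ℝ) - 1)) / (2 * (k₁ : ℝ)))) * w τ m
    = RD1.eval (Complex.I * (m : ℂ)) *
        (τ ^ (dD1 + k₁) /
          qc q ((((dD1 : ℝ) + (k₁ : ℝ)) * ((dD1 : ℝ) + (k₁ : ℝ) - 1)) / (2 * (k₁ : ℝ)))) * w τ m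
    + RD2.eval (Complex.I * (m : ℂ)) *
        (τ ^ (dD2 + k₁) /
          qc q ((((dD2 : ℝ) + (k₁ : ℝ)) * ((dD2 : ℝ) + (k₁ : ℝ) - 1)) / (2 * (k₁ : ℝ)))) *
        w (qc q ((dD2 : ℝ) * (1 / (k₂ : ℝ) - 1 / (k₁ : ℝ))) * τ) m
    + (τ ^ k₁ / qc q (((k₁ : ℝ) * ((k₁ : ℝ) - 1)) / (2 * (k₁ : ℝ)))) * Ψ τ m
    + ∑ ℓ ∈ Finset.Icc 1 (D - 1),
        ε ^ (Δ ℓ - d ℓ) *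
          (τ ^ (d ℓ + k₁) /
            qc q ((((d ℓ : ℝ) + (k₁ : ℝ)) * ((d ℓ : ℝ) + (k₁ : ℝ) - 1)) / (2 * (k₁ : ℝ)))) *
          (((Real.sqrt (2 * Real.pi) : ℝ) : ℂ)⁻¹ *
            qConv q (k₁ : ℝ) p₁ (Rl ℓ) (C ℓ)
              w (qc q ((δ' ℓ : ℝ) - (d ℓ : ℝ) / (k₁ : ℝ) - 1) * τ) m)

/-- The second auxiliary equation in the `q`-Borel plane of order `k₂` (equation (33)). -/
def borelEq2 (q : ℝ) (k₁ k₂ : ℕ) (D p₁ : ℕ) (dD1 dD2 : ℕ) (d δ' Δ : ℕ → ℕ)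
    (Qp RD1 RD2 : Polynomial ℂ) (Rl : ℕ → Polynomial ℂ)
    (C : ℕ → ℕ → ℝ → ℂ) (Ψ₂ : ℂ → ℝ → ℂ) (ε : ℂ)
    (w : ℂ → ℝ → ℂ) (τ : ℂ) (m : ℝ) : Prop :=
  Qp.eval (Complex.I * (m : ℂ)) *
      (τ ^ k₂ / qc q (((k₂ : ℝ) * ((k₂ : ℝ) - 1)) / (2 * (k₂ : ℝ)))) * w τ m
    = RD1.eval (Complex.I * (m : ℂ)) *
        (τ ^ (dD1 + k₂) /
          qc q ((((dD1 : ℝ) + (k₂ : ℝ)) * ((dD1 : ℝ) + (k₂ : ℝ) - 1)) / (2 * (k₂ : ℝ)))) *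
        w (qc q ((dD1 : ℝ) * (1 / (k₁ : ℝ) - 1 / (k₂ : ℝ))) * τ) m
    + RD2.eval (Complex.I * (m : ℂ)) *
        (τ ^ (dD2 + k₂) /
          qc q ((((dD2 : ℝ) + (k₂ : ℝ)) * ((dD2 : ℝ) + (k₂ : ℝ) - 1)) / (2 * (k₂ : ℝ)))) * w τ m
    + (τ ^ k₂ / qc q (((k₂ : ℝ) * ((k₂ : ℝ) - 1)) / (2 * (k₂ : ℝ)))) * Ψ₂ τ m
    + ∑ ℓ ∈ Finset.Icc 1 (D - 1),
        ε ^ (Δ ℓ - d ℓ) *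
          (τ ^ (d ℓ + k₂) /
            qc q ((((d ℓ : ℝ) + (k₂ : ℝ)) * ((d ℓ : ℝ) + (k₂ : ℝ) - 1)) / (2 * (k₂ : ℝ)))) *
          (((Real.sqrt (2 * Real.pi) : ℝ) : ℂ)⁻¹ *
            qConv q (k₂ : ℝ) p₁ (Rl ℓ) (C ℓ)
              w (qc q ((δ' ℓ : ℝ) - (d ℓ : ℝ) / (k₂ : ℝ) - 1) * τ) m)


lemma qc_ne_zero {q : ℝ} (hq : 0 < q) (a : ℝ) : qc q a ≠ 0 := by
  simp only [qc, ne_eq, Complex.ofReal_eq_zero]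
  exact (Real.rpow_pos_of_pos hq a).ne'

lemma qc_add {q : ℝ} (hq : 0 < q) (a b : ℝ) : qc q (a + b) = qc q a * qc q b := by
  simp [qc, Real.rpow_add hq, Complex.ofReal_mul]

lemma qc_neg {q : ℝ} (hq : 0 < q) (a : ℝ) : qc q (-a) = (qc q a)⁻¹ := by
  simp only [qc, Real.rpow_neg hq.le]
  push_cast
  rfl

lemma qc_zpow {q : ℝ} (hq : 0 < q) (a : ℝ) (n : ℤ) : qc q a ^ n = qc q (a * n) := by
  simp only [qc]
  rw [← Complex.ofReal_zpow]
  congr 1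
  rw [← Real.rpow_intCast (q ^ a) n, ← Real.rpow_mul hq.le]

/-- The theta functional equation `Θ(x) = (x^σ / q^{σ(σ-1)/(2k)}) Θ(q^{-σ/k} x)`. -/
lemma thetaShift {q kk : ℝ} (hq : 0 < q) (hkk : kk ≠ 0) (σ : ℕ) {x : ℂ} (hx : x ≠ 0) :
    theta q kk x = (x ^ σ / qc q (((σ : ℝ) * ((σ : ℝ) - 1)) / (2 * kk))) *
      theta q kk (qc q (-((σ : ℝ) / kk)) * x) := by
  unfold theta
  rw [← tsum_mul_left, ← (Equiv.addRight (σ : ℤ)).tsum_eq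
    (fun n : ℤ => qc q (-(((n : ℝ) * ((n : ℝ) - 1)) / (2 * kk))) * x ^ n)]
  refine tsum_congr fun n => ?_
  simp only [Equiv.coe_addRight]
  have hdiv : x ^ σ / qc q (((σ : ℝ) * ((σ : ℝ) - 1)) / (2 * kk))
      = x ^ σ * qc q (-(((σ : ℝ) * ((σ : ℝ) - 1)) / (2 * kk))) := by
    rw [qc_neg hq, div_eq_mul_inv]
  rw [hdiv, mul_zpow, qc_zpow hq, zpow_add₀ hx, zpow_natCast]
  have he : (-((((n + (σ : ℤ) : ℤ)) : ℝ) * ((((n + (σ : ℤ) : ℤ)) : ℝ) - 1) / (2 * kk)))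
      = (-(((σ : ℝ) * ((σ : ℝ) - 1)) / (2 * kk))) +
        ((-(((n : ℝ) * ((n : ℝ) - 1)) / (2 * kk))) + (-((σ : ℝ) / kk) * (n : ℝ))) := by
    push_cast
    field_simp
    ring
  rw [he, qc_add hq, qc_add hq]
  push_cast
  ring

lemma auxScalar (σ : ℕ) (p θ Q x T c t : ℂ) (hQ : Q ≠ 0) (hx : x ≠ 0) (hc : c ≠ 0) :
    (p * ((x ^ σ / Q) * θ) * t)⁻¹ * ((x * T) ^ σ / Q)
      = c * (T ^ σ * (p * θ * (c * t))⁻¹) := by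
  rcases eq_or_ne p 0 with rfl | hp
  · simp
  rcases eq_or_ne θ 0 with rfl | hθ
  · simp
  rcases eq_or_ne t 0 with rfl | ht
  · simp
  have hxQ : x ^ σ / Q ≠ 0 := div_ne_zero (pow_ne_zero _ hx) hQ
  have h1 : p * ((x ^ σ / Q) * θ) * t = (x ^ σ / Q) * (p * θ * t) := by ring
  have h2 : p * θ * (c * t) = c * (p * θ * t) := by ring
  rw [h1, h2, mul_inv (x ^ σ / Q) (p * θ * t), mul_inv c (p * θ * t), mul_pow]
  have h3 : (x ^ σ / Q)⁻¹ * (p * θ * t)⁻¹ * (x ^ σ * T ^ σ / Q)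
      = ((x ^ σ / Q)⁻¹ * (x ^ σ / Q)) * ((p * θ * t)⁻¹ * T ^ σ) := by ring
  rw [h3, inv_mul_cancel₀ hxQ, one_mul]
  have h4 : c * (T ^ σ * (c⁻¹ * (p * θ * t)⁻¹)) = (c * c⁻¹) * ((p * θ * t)⁻¹ * T ^ σ) := by
    ring
  rw [h4, mul_inv_cancel₀ hc, one_mul]

/-- commutation of `T^σ σ_q^j` with the `q`-Laplace transform of order `k`:
`T^σ σ_q^j (L^d_{q;1/k} f)(T) = L^d_{q;1/k}( x^σ/(q^{1/k})^{σ(σ-1)/2} σ_q^{j-σ/k} f )(T)`. -/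
theorem statement5 {E : Type*} [NormedAddCommGroup E] [NormedSpace ℂ E]
    (q : ℝ) (hq : 1 < q) (k : ℚ) (hk : 1 ≤ k) (δt : ℝ) (hδt : 0 < δt)
    (ρ : ℝ) (hρ : 0 < ρ) (d op : ℝ) (hop : 0 < op)
    (f : ℂ → E)
    (hf : DifferentiableOn ℂ f (Metric.ball 0 ρ ∪ uSector d op))
    (hfc : ContinuousOn f (Metric.closedBall 0 ρ))
    (K α : ℝ) (hK : 0 < K)
    (hgrowth : ∀ x ∈ uSector d op, ρ ≤ ‖x‖ →
      ‖f x‖ ≤ K * Real.exp ((k : ℝ) * (Real.log (‖x‖)) ^ 2 / (2 * Real.log q)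
        + α * Real.log (‖x‖)))
    (hbdd : ∀ x ∈ Metric.closedBall (0 : ℂ) ρ, ‖f x‖ ≤ K)
    (hd : ∀ t : ℝ, 0 < t → ray d t ∈ Metric.ball 0 ρ ∪ uSector d op)
    (σ : ℕ) (j : ℚ) :
    ∀ r₁ : ℝ, 0 < r₁ → r₁ ≤ q ^ ((1 / 2 - α) / (k : ℝ)) / 2 →
      ∀ T ∈ Rset d δt ∩ Metric.ball (0 : ℂ) r₁,
        (T ^ σ) • qLaplace q (k : ℝ) d f (qc q (j : ℝ) * T)
          = qLaplace q (k : ℝ) d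
              (fun x =>
                (x ^ σ / qc q (((σ : ℝ) * ((σ : ℝ) - 1)) / (2 * (k : ℝ)))) •
                  f (qc q ((j : ℝ) - (σ : ℝ) / (k : ℝ)) * x)) T := by
  intro r₁ hr₁ hr₁' T hT
  obtain ⟨⟨hT0, -⟩, -⟩ := hT
  have hq0 : (0 : ℝ) < q := lt_trans one_pos hq
  have hkk : ((k : ℝ)) ≠ 0 := by
    have : (1 : ℝ) ≤ (k : ℝ) := by exact_mod_cast hk
    linarith
  set c : ℝ := q ^ ((j : ℝ) - (σ : ℝ) / (k : ℝ)) with hc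
  have hcpos : 0 < c := Real.rpow_pos_of_pos hq0 _
  have hcC : qc q ((j : ℝ) - (σ : ℝ) / (k : ℝ)) = (c : ℂ) := rfl
  have hcne : (c : ℂ) ≠ 0 := by exact_mod_cast hcpos.ne'
  unfold qLaplace
  rw [← MeasureTheory.integral_smul]
  -- the integrand of the LHS, with `T^σ` inside
  set G : ℝ → E := fun s =>
    (T ^ σ) • ((((piq q (k : ℝ) : ℝ) : ℂ) * theta q (k : ℝ) (ray d s / (qc q (j : ℝ) * T)) *
      ((s : ℝ) : ℂ))⁻¹) • f (ray d s) with hG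
  have key : ∀ t : ℝ,
      ((((piq q (k : ℝ) : ℝ) : ℂ) * theta q (k : ℝ) (ray d t / T) * ((t : ℝ) : ℂ))⁻¹) •
        ((ray d t ^ σ / qc q (((σ : ℝ) * ((σ : ℝ) - 1)) / (2 * (k : ℝ)))) •
          f (qc q ((j : ℝ) - (σ : ℝ) / (k : ℝ)) * ray d t))
      = ((c : ℝ) : ℂ) • G (c * t) := by
    intro t
    have hray : ray d (c * t) = (c : ℂ) * ray d t := by
      simp only [ray]
      push_cast
      ring
    rcases eq_or_ne t 0 with rfl | ht
    · simp [G, hray]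
    have hu : ray d t ≠ 0 := by
      simp only [ray]
      exact mul_ne_zero (by exact_mod_cast ht) (Complex.exp_ne_zero _)
    have hx : ray d t / T ≠ 0 := div_ne_zero hu hT0
    -- rewrite the theta argument on the RHS
    have hqj : qc q (j : ℝ) = (c : ℂ) * qc q ((σ : ℝ) / (k : ℝ)) := by
      rw [← hcC, ← qc_add hq0]
      congr 1
      ring
    have harg : (c : ℂ) * ray d t / (qc q (j : ℝ) * T)
        = qc q (-((σ : ℝ) / (k : ℝ))) * (ray d t / T) := by
      rw [hqj, qc_neg hq0]
      field_simp [qc_ne_zero hq0]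
    simp only [hG, hray, harg, hcC]
    rw [thetaShift hq0 hkk σ hx]
    simp only [smul_smul]
    congr 1
    set x : ℂ := ray d t / T with hxd
    have hrayx : ray d t = x * T := by
      rw [hxd]
      field_simp
    rw [hrayx]
    push_cast
    exact auxScalar σ _ _ _ _ _ _ _ (qc_ne_zero hq0 _) hx hcne
  calc (∫ t in Ioi (0:ℝ), (T ^ σ) •
        ((((piq q (k : ℝ) : ℝ) : ℂ) * theta q (k : ℝ) (ray d t / (qc q (j : ℝ) * T)) *
          ((t : ℝ) : ℂ))⁻¹) • f (ray d t))
      = ∫ t in Ioi (0:ℝ), G t := by rfl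
    _ = ((c : ℝ) : ℂ) • ∫ t in Ioi (0:ℝ), G (c * t) := by
        rw [MeasureTheory.integral_comp_mul_left_Ioi G 0 hcpos, mul_zero]
        rw [← algebraMap_smul ℂ c⁻¹ (∫ t in Ioi (0:ℝ), G t), Complex.coe_algebraMap,
          smul_smul]
        push_cast
        rw [mul_inv_cancel₀ hcne, one_smul]
    _ = ∫ t in Ioi (0:ℝ), ((c : ℝ) : ℂ) • G (c * t) :=
        (MeasureTheory.integral_smul ((c : ℝ) : ℂ) fun t => G (c * t)).symm
    _ = _ := by
        refine MeasureTheory.integral_congr_ae (Filter.Eventually.of_forall fun t => ?_)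
        exact (key t).symm

end Paper
end
end

section
/- Let (𝔽, ‖·‖_𝔽) be a complex Banach space, q>1 real, k a positive integer, and V a bounded open sector with vertex 0 in ℂ. A holomorphic function f: V → 𝔽 admits the null formal power series 0̂ ∈ 𝔽[[ε]] as its q-Gevrey asymptotic expansion of order 1/k if and only if for every open subsector U with closure(U)∖{0} ⊆ V there exist constants K₁ ∈ ℝ and K₂ > 0 with ‖f(ε)‖_𝔽 ≤ K₂ exp( −k·log²|ε|/(2 log q) ) |ε|^{K₁} for all ε ∈ U. -/
noncomputable section

open Complex MeasureTheory Set

namespace Paper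

lemma abs_of_mem_bSector {d op r : ℝ} {ε : ℂ} (h : ε ∈ bSector d op r) :
    0 < ‖ε‖ ∧ ‖ε‖ < r := by
  obtain ⟨t, θ, ht, htr, -, rfl⟩ := h
  have : ‖(t : ℂ) * Complex.exp (Complex.I * (θ : ℂ))‖ = t := by
    rw [norm_mul, Complex.norm_exp]
    simp [Complex.mul_re, abs_of_pos ht]
  rw [this]; exact ⟨ht, htr⟩

lemma backExp (B K₁ L : ℝ) (hB : 0 < B) (N : ℕ) :
    -L^2/(4*B) + K₁*L ≤ K₁^2*B + ((N:ℝ)+1)*((1-2*K₁)*B) + (N:ℝ)*((N:ℝ)+1)*B + ((N:ℝ)+1)*L := by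
  have hne : (4*B) ≠ 0 := by positivity
  have heq : K₁^2*B + ((N:ℝ)+1)*((1-2*K₁)*B) + (N:ℝ)*((N:ℝ)+1)*B + ((N:ℝ)+1)*L
      - (-L^2/(4*B) + K₁*L) = (L + 2*B*(((N:ℝ)+1)-K₁))^2/(4*B) := by
    field_simp; ring
  have h2 : 0 ≤ (L + 2*B*(((N:ℝ)+1)-K₁))^2/(4*B) :=
    div_nonneg (sq_nonneg _) (by linarith)
  linarith

lemma case1 (B a L r : ℝ) (hB : 0 < B)
    (hr1 : (B-a-L)/(2*B) ≤ r) (hr2 : r < (B-a-L)/(2*B) + 1) :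
    r*(a+L) + (r-1)*r*B
      ≤ (B - (a-B)^2/(4*B)) + (-L^2/(4*B) + (-(a-B)/(2*B))*L) := by
  set n : ℝ := (B-a-L)/(2*B) with hn
  have hBne : (2*B) ≠ 0 := by positivity
  have h2Bn : 2*B*n = B-a-L := by rw [hn]; field_simp
  have hid : r*(a+L) + (r-1)*r*B = B*(r-n)^2 - B*n^2 := by
    linear_combination r * h2Bn
  have hsq : (r-n)^2 ≤ 1 := by nlinarith
  have hX : B*(r-n)^2 ≤ B*1 := mul_le_mul_of_nonneg_left hsq hB.le
  have hBn2 : B*n^2 = (B-a-L)^2/(4*B) := by rw [hn]; field_simp; ring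
  have hfin : B - (B-a-L)^2/(4*B)
      = (B - (a-B)^2/(4*B)) + (-L^2/(4*B) + (-(a-B)/(2*B))*L) := by
    field_simp; ring
  linarith

lemma forward_key (B L₀ a C : ℝ) (hB : 0 < B) (hC : 0 < C) :
    ∃ K₁ K₂ : ℝ, 0 < K₂ ∧ ∀ L : ℝ, L ≤ L₀ → ∃ N : ℕ,
      C * Real.exp (((N:ℝ)+1)*(a+L) + (N:ℝ)*((N:ℝ)+1)*B)
        ≤ K₂ * Real.exp (-L^2/(4*B) + K₁ * L) := by
  set K₁ : ℝ := -(a-B)/(2*B) with hK₁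
  set M : ℝ := max |L₀| |a+B| with hM
  set c₁ : ℝ := B - (a-B)^2/(4*B) with hc₁
  set c₂ : ℝ := a + (1+|K₁|)*M + M^2/(4*B) with hc₂
  refine ⟨K₁, C * Real.exp (max c₁ c₂), by positivity, ?_⟩
  intro L hL
  have key : ∃ N : ℕ, ((N:ℝ)+1)*(a+L) + (N:ℝ)*((N:ℝ)+1)*B
      ≤ (max c₁ c₂) + (-L^2/(4*B) + K₁*L) := by
    by_cases hcase : L ≤ -a - B
    · set m : ℝ := (B-a-L)/(2*B) with hm
      have hn1 : (1:ℝ) ≤ m := by rw [hm, le_div_iff₀ (by linarith)]; linarith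
      have hceilR : (1:ℝ) ≤ (⌈m⌉ : ℝ) := le_trans hn1 (Int.le_ceil _)
      have hceil : (1:ℤ) ≤ ⌈m⌉ := by exact_mod_cast hceilR
      refine ⟨(⌈m⌉ - 1).toNat, ?_⟩
      have h0 : (((⌈m⌉ - 1).toNat : ℕ) : ℤ) = ⌈m⌉ - 1 := Int.toNat_of_nonneg (by omega)
      have hNc : ((((⌈m⌉ - 1).toNat : ℕ)) : ℝ) + 1 = (⌈m⌉ : ℝ) := by
        have h1 := congrArg (fun z : ℤ => (z : ℝ)) h0
        push_cast at h1
        linarith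
      have hr1 : (B-a-L)/(2*B) ≤ (((⌈m⌉ - 1).toNat : ℕ) : ℝ) + 1 := by
        rw [hNc]; exact Int.le_ceil _
      have hr2 : (((⌈m⌉ - 1).toNat : ℕ) : ℝ) + 1 < (B-a-L)/(2*B) + 1 := by
        rw [hNc]
        have hcl := Int.ceil_lt_add_one m
        rw [hm] at hcl
        linarith
      have hg := case1 B a L ((((⌈m⌉ - 1).toNat : ℕ) : ℝ) + 1) hB hr1 hr2
      have heqg : ((((⌈m⌉ - 1).toNat : ℕ) : ℝ)+1)*(a+L)
            + (((⌈m⌉ - 1).toNat : ℕ) : ℝ)*((((⌈m⌉ - 1).toNat : ℕ) : ℝ)+1)*B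
          = ((((⌈m⌉ - 1).toNat : ℕ) : ℝ)+1)*(a+L)
            + (((((⌈m⌉ - 1).toNat : ℕ) : ℝ)+1)-1)*((((⌈m⌉ - 1).toNat : ℕ) : ℝ)+1)*B := by
        ring
      rw [← heqg, ← hK₁, ← hc₁] at hg
      exact hg.trans (add_le_add_left (le_max_left c₁ c₂) _)
    · refine ⟨0, ?_⟩
      push_neg at hcase
      have hLM : |L| ≤ M := by
        rw [abs_le]
        constructor
        · have h1 : -L < a + B := by linarith
          have h2 : a + B ≤ |a+B| := le_abs_self _
          have h3 : -L ≤ M := le_trans (le_of_lt h1) (le_trans h2 (le_max_right _ _))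
          linarith
        · exact le_trans hL (le_trans (le_abs_self _) (le_max_left _ _))
      have hL2 : L^2 ≤ M^2 := by nlinarith [abs_nonneg L, _root_.sq_abs L]
      have hdiv : L^2/(4*B) ≤ M^2/(4*B) :=
        div_le_div_of_nonneg_right hL2 (by linarith) |>.trans_eq rfl
      have hlin : (1-K₁)*L ≤ (1+|K₁|)*M := by
        have h1 : (1-K₁)*L ≤ |1 - K₁| * |L| := by
          calc (1-K₁)*L ≤ |(1-K₁)*L| := le_abs_self _
            _ = |1 - K₁| * |L| := abs_mul _ _
        have h2 : |1-K₁| ≤ 1+|K₁| := by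
          calc |1-K₁| ≤ |(1:ℝ)| + |K₁| := abs_sub _ _
            _ = 1 + |K₁| := by rw [abs_one]
        have h3 : |1 - K₁| * |L| ≤ (1+|K₁|)*M :=
          mul_le_mul h2 hLM (abs_nonneg _) (by positivity)
        linarith
      have hnd : -L^2/(4*B) = -(L^2/(4*B)) := neg_div _ _
      have hstep : ((0:ℕ):ℝ)*(((0:ℕ):ℝ)+1)*B = 0 := by norm_num
      have : (((0:ℕ):ℝ)+1)*(a+L) + ((0:ℕ):ℝ)*(((0:ℕ):ℝ)+1)*B = a + L := by norm_num
      rw [this]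
      have hc2b : a + L ≤ c₂ + (-L^2/(4*B) + K₁*L) := by
        rw [hc₂, hnd]; linarith
      exact hc2b.trans (add_le_add_left (le_max_right c₁ c₂) _)
  obtain ⟨N, hN⟩ := key
  refine ⟨N, ?_⟩
  calc C * Real.exp (((N:ℝ)+1)*(a+L) + (N:ℝ)*((N:ℝ)+1)*B)
      ≤ C * Real.exp ((max c₁ c₂) + (-L^2/(4*B) + K₁*L)) :=
        mul_le_mul_of_nonneg_left (Real.exp_le_exp.mpr hN) hC.le
    _ = C * Real.exp (max c₁ c₂) * Real.exp (-L^2/(4*B) + K₁*L) := by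
        rw [Real.exp_add]; ring

lemma exp_pow (y : ℝ) (N : ℕ) : Real.exp y ^ (N+1) = Real.exp (((N:ℝ)+1)*y) := by
  have h : Real.exp (((N:ℝ)+1)*y) = Real.exp (((N+1:ℕ):ℝ)*y) := by push_cast; ring_nf
  rw [h, Real.exp_nat_mul]

lemma prod_form (q k x C A : ℝ) (hq : 1 < q) (hA : 0 < A) (hx : 0 < x) (N : ℕ) :
    C * A^(N+1) * q ^ (((N:ℝ)*((N:ℝ)+1))/(2*k)) * x^(N+1)
      = C * Real.exp (((N:ℝ)+1)*Real.log A + (N:ℝ)*((N:ℝ)+1)*(Real.log q/(2*k))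
          + ((N:ℝ)+1)*Real.log x) := by
  have hq0 : (0:ℝ) < q := lt_trans zero_lt_one hq
  have e1 : A^(N+1) = Real.exp (((N:ℝ)+1)*Real.log A) := by
    rw [← exp_pow, Real.exp_log hA]
  have e2 : x^(N+1) = Real.exp (((N:ℝ)+1)*Real.log x) := by
    rw [← exp_pow, Real.exp_log hx]
  rw [e1, e2, Real.rpow_def_of_pos hq0, mul_assoc, mul_assoc, ← Real.exp_add, ← Real.exp_add]
  congr 1
  rw [Real.exp_eq_exp]
  ring

lemma rhs_form (q k x K₁ K₂ : ℝ) (hq : 1 < q) (hk : 0 < k) (hx : 0 < x) :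
    K₂ * Real.exp (-(Real.log x)^2/(4*(Real.log q/(2*k))) + K₁ * Real.log x)
      = K₂ * Real.exp (-k*(Real.log x)^2/(2*Real.log q)) * x ^ K₁ := by
  rw [Real.rpow_def_of_pos hx, mul_assoc, ← Real.exp_add]
  congr 2
  have hlq : Real.log q ≠ 0 := ne_of_gt (Real.log_pos hq)
  have hk' : k ≠ 0 := ne_of_gt hk
  field_simp
  ring

/-- characterization of functions with null `q`-Gevrey asymptotic expansion of
order `1/k` (Lemma 20 of the paper). -/
theorem statement15 {F : Type*} [NormedAddCommGroup F] [NormedSpace ℂ F]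
    (q : ℝ) (hq : 1 < q) (k : ℕ) (hk : 0 < k)
    (d₀ op₀ r₀ : ℝ) (hop₀ : 0 < op₀) (hr₀ : 0 < r₀)
    (f : ℂ → F) (hf : DifferentiableOn ℂ f (bSector d₀ op₀ r₀)) :
    HasQExp q (k : ℝ) (bSector d₀ op₀ r₀) f (fun _ => 0) ↔
      ∀ d op r : ℝ, 0 < op → 0 < r →
        closure (bSector d op r) \ {0} ⊆ bSector d₀ op₀ r₀ →
        ∃ K₁ : ℝ, ∃ K₂ : ℝ, 0 < K₂ ∧ ∀ ε ∈ bSector d op r,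
          ‖f ε‖ ≤ K₂ * Real.exp (-(k : ℝ) * (Real.log (‖ε‖)) ^ 2 / (2 * Real.log q)) *
            ‖ε‖ ^ K₁ := by
  have hq0 : (0:ℝ) < Real.log q := Real.log_pos hq
  have hk' : (0:ℝ) < (k:ℝ) := by exact_mod_cast hk
  have hBpos : 0 < Real.log q / (2*(k:ℝ)) := by positivity
  constructor
  · intro hyp d op r hop hr hsub
    obtain ⟨A, C, hA, hC, hb⟩ := hyp d op r hop hr hsub
    obtain ⟨K₁, K₂, hK₂, hkey⟩ :=
      forward_key (Real.log q/(2*(k:ℝ))) (Real.log r) (Real.log A) C hBpos hC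
    refine ⟨K₁, K₂, hK₂, ?_⟩
    intro ε hε
    obtain ⟨hx0, hxr⟩ := abs_of_mem_bSector hε
    have hLr : Real.log (‖ε‖) ≤ Real.log r := Real.log_le_log hx0 hxr.le
    obtain ⟨N, hN⟩ := hkey (Real.log (‖ε‖)) hLr
    have hbound := hb ε hε N
    simp only [smul_zero, Finset.sum_const_zero, sub_zero] at hbound
    calc ‖f ε‖
        ≤ C * A^(N+1) * q ^ (((N:ℝ)*((N:ℝ)+1))/(2*(k:ℝ))) * ‖ε‖ ^ (N+1) := hbound
      _ = C * Real.exp (((N:ℝ)+1)*Real.log A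
            + (N:ℝ)*((N:ℝ)+1)*(Real.log q/(2*(k:ℝ)))
            + ((N:ℝ)+1)*Real.log (‖ε‖)) :=
          prod_form q (k:ℝ) (‖ε‖) C A hq hA hx0 N
      _ = C * Real.exp (((N:ℝ)+1)*(Real.log A + Real.log (‖ε‖))
            + (N:ℝ)*((N:ℝ)+1)*(Real.log q/(2*(k:ℝ)))) := by
          congr 1
          rw [Real.exp_eq_exp]
          ring
      _ ≤ K₂ * Real.exp (-(Real.log (‖ε‖))^2/(4*(Real.log q/(2*(k:ℝ))))
            + K₁ * Real.log (‖ε‖)) := hN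
      _ = K₂ * Real.exp (-(k:ℝ)*(Real.log (‖ε‖))^2/(2*Real.log q))
            * ‖ε‖ ^ K₁ := rhs_form q (k:ℝ) (‖ε‖) K₁ K₂ hq hk' hx0
  · intro hyp d op r hop hr hsub
    obtain ⟨K₁, K₂, hK₂, hbd⟩ := hyp d op r hop hr hsub
    refine ⟨Real.exp ((1-2*K₁)*(Real.log q/(2*(k:ℝ)))),
      K₂ * Real.exp (K₁^2*(Real.log q/(2*(k:ℝ)))), Real.exp_pos _, by positivity, ?_⟩
    intro ε hε N
    obtain ⟨hx0, hxr⟩ := abs_of_mem_bSector hε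
    simp only [smul_zero, Finset.sum_const_zero, sub_zero]
    have hmono := mul_le_mul_of_nonneg_left
      (Real.exp_le_exp.mpr
        (backExp (Real.log q/(2*(k:ℝ))) K₁ (Real.log (‖ε‖)) hBpos N)) hK₂.le
    calc ‖f ε‖
        ≤ K₂ * Real.exp (-(k:ℝ)*(Real.log (‖ε‖))^2/(2*Real.log q))
            * ‖ε‖ ^ K₁ := hbd ε hε
      _ = K₂ * Real.exp (-(Real.log (‖ε‖))^2/(4*(Real.log q/(2*(k:ℝ))))
            + K₁ * Real.log (‖ε‖)) :=
          (rhs_form q (k:ℝ) (‖ε‖) K₁ K₂ hq hk' hx0).symm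
      _ ≤ K₂ * Real.exp (K₁^2*(Real.log q/(2*(k:ℝ)))
            + ((N:ℝ)+1)*((1-2*K₁)*(Real.log q/(2*(k:ℝ))))
            + (N:ℝ)*((N:ℝ)+1)*(Real.log q/(2*(k:ℝ)))
            + ((N:ℝ)+1)*Real.log (‖ε‖)) := hmono
      _ = (K₂ * Real.exp (K₁^2*(Real.log q/(2*(k:ℝ)))))
            * Real.exp ((1-2*K₁)*(Real.log q/(2*(k:ℝ)))) ^ (N+1)
            * q ^ (((N:ℝ)*((N:ℝ)+1))/(2*(k:ℝ))) * ‖ε‖ ^ (N+1) := by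
          rw [prod_form q (k:ℝ) (‖ε‖) (K₂ * Real.exp (K₁^2*(Real.log q/(2*(k:ℝ)))))
            (Real.exp ((1-2*K₁)*(Real.log q/(2*(k:ℝ))))) hq (Real.exp_pos _) hx0 N]
          rw [Real.log_exp, mul_assoc K₂, ← Real.exp_add]
          congr 1
          rw [Real.exp_eq_exp]
          ring


end Paper
end
end
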